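/- The dot-product self-attention map Attn(X) = softmax(X W^Q (X W^K)ᵀ / √D) X W^V, viewed as a function of X ∈ ℝ^{N×d} with fixed nonzero weight matrices W^Q, W^K, W^V, is not globally Lipschitz continuous on ℝ^{N×d} whenever N ≥ 2 and W^Q (W^K)ᵀ ≠ 0. -/

import Mathlib

open Matrix

/-- Frobenius norm of a real matrix. -/
noncomputable def frobNorm {m n : Type*} [Fintype m] [Fintype n] (A : Matrix m n ℝ) : ℝ :=
  Real.sqrt (∑ i, ∑ j, (A i j) ^ 2)

/-- Row-wise softmax of a square score matrix. -/
noncomputable def softmaxRows {N : ℕ} (S : Matrix (Fin N) (Fin N) ℝ) :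
    Matrix (Fin N) (Fin N) ℝ :=
  fun i j => Real.exp (S i j) / ∑ k, Real.exp (S i k)

/-- Dot-product self-attention. -/
noncomputable def attn {N d D : ℕ} (Wq Wk Wv : Matrix (Fin d) (Fin D) ℝ)
    (X : Matrix (Fin N) (Fin d) ℝ) : Matrix (Fin N) (Fin D) ℝ :=
  softmaxRows ((1 / Real.sqrt D) • (X * Wq * (X * Wk)ᵀ)) * X * Wv

lemma fin_sum_ite {N : ℕ} [NeZero N] (A B : ℝ) :
    (∑ k : Fin N, if k = 0 then A else B) = A + ((N:ℝ) - 1) * B := by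
  have h : (∑ k : Fin N, if k = 0 then A else B)
      = ∑ k : Fin N, (B + if k = 0 then A - B else 0) := by
    apply Finset.sum_congr rfl; intro k _; split <;> ring
  rw [h, Finset.sum_add_distrib, Finset.sum_const, Finset.sum_ite_eq' Finset.univ (0 : Fin N)]
  simp [Finset.card_univ]
  ring

lemma abs_entry_le_frobNorm {m n : Type*} [Fintype m] [Fintype n] (A : Matrix m n ℝ)
    (i : m) (j : n) : |A i j| ≤ frobNorm A := by
  rw [frobNorm, ← Real.sqrt_sq_eq_abs]
  apply Real.sqrt_le_sqrt
  have h1 : (A i j)^2 ≤ ∑ j', (A i j')^2 :=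
    Finset.single_le_sum (f := fun j' => (A i j')^2) (fun _ _ => sq_nonneg _) (Finset.mem_univ j)
  have h2 : (∑ j', (A i j')^2) ≤ ∑ i', ∑ j', (A i' j')^2 :=
    Finset.single_le_sum (f := fun i' => ∑ j', (A i' j')^2)
      (fun _ _ => Finset.sum_nonneg fun _ _ => sq_nonneg _) (Finset.mem_univ i)
  exact le_trans h1 h2

lemma attn_row_zero {N d D : ℕ} [NeZero N] (hN : 2 ≤ N)
    (Wq Wk Wv : Matrix (Fin d) (Fin D) ℝ) (r y : Fin d → ℝ) (q : Fin D) :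
    attn Wq Wk Wv (Matrix.of fun j i => if j = (0 : Fin N) then r i else y i) 0 q =
      (Real.exp (1 / Real.sqrt D * ∑ k, (∑ i, r i * Wq i k) * (∑ i, r i * Wk i k)) * (∑ i, r i * Wv i q)
        + ((N : ℝ) - 1) * Real.exp (1 / Real.sqrt D * ∑ k, (∑ i, r i * Wq i k) * (∑ i, y i * Wk i k)) * (∑ i, y i * Wv i q))
      / (Real.exp (1 / Real.sqrt D * ∑ k, (∑ i, r i * Wq i k) * (∑ i, r i * Wk i k))
        + ((N : ℝ) - 1) * Real.exp (1 / Real.sqrt D * ∑ k, (∑ i, r i * Wq i k) * (∑ i, y i * Wk i k))) := by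
  set σ : ℝ := 1 / Real.sqrt D with hσ
  set X : Matrix (Fin N) (Fin d) ℝ := Matrix.of fun j i => if j = (0 : Fin N) then r i else y i with hX
  set Srr : ℝ := ∑ k, (∑ i, r i * Wq i k) * (∑ i, r i * Wk i k) with hSrr
  set Sry : ℝ := ∑ k, (∑ i, r i * Wq i k) * (∑ i, y i * Wk i k) with hSry
  set Rv : ℝ := ∑ i, r i * Wv i q with hRv
  set Yv : ℝ := ∑ i, y i * Wv i q with hYv
  have hg : (0:ℝ) ≤ (N:ℝ) - 1 := by
    have : (2:ℝ) ≤ (N:ℝ) := by exact_mod_cast hN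
    linarith
  have hq' : ∀ m, (X * Wq) 0 m = ∑ i, r i * Wq i m := by
    intro m; simp [hX, Matrix.mul_apply]
  have hk' : ∀ (j : Fin N) m, (X * Wk) j m
      = if j = 0 then ∑ i, r i * Wk i m else ∑ i, y i * Wk i m := by
    intro j m; by_cases h : j = 0 <;> simp [hX, Matrix.mul_apply, h]
  have hv' : ∀ (j : Fin N), (X * Wv) j q = if j = 0 then Rv else Yv := by
    intro j; by_cases h : j = 0 <;> simp [hX, Matrix.mul_apply, h, hRv, hYv]
  have hT : ∀ (j : Fin N), (σ • (X * Wq * (X * Wk)ᵀ)) 0 j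
      = if j = 0 then σ * Srr else σ * Sry := by
    intro j
    rw [Matrix.smul_apply, Matrix.mul_apply]
    simp_rw [Matrix.transpose_apply, hq', hk']
    by_cases h : j = 0 <;> simp [h, hSrr, hSry, Finset.mul_sum]
  have hDn : (∑ k, Real.exp ((σ • (X * Wq * (X * Wk)ᵀ)) 0 k))
      = Real.exp (σ * Srr) + ((N:ℝ) - 1) * Real.exp (σ * Sry) := by
    simp_rw [hT, apply_ite Real.exp]
    exact fin_sum_ite _ _
  have hDnpos : 0 < Real.exp (σ * Srr) + ((N:ℝ) - 1) * Real.exp (σ * Sry) :=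
    add_pos_of_pos_of_nonneg (Real.exp_pos _) (mul_nonneg hg (Real.exp_pos _).le)
  show (softmaxRows (σ • (X * Wq * (X * Wk)ᵀ)) * X * Wv) 0 q = _
  rw [Matrix.mul_assoc, Matrix.mul_apply]
  simp_rw [softmaxRows, hv', hDn]
  have hterm : ∀ (j : Fin N),
      Real.exp ((σ • (X * Wq * (X * Wk)ᵀ)) 0 j)
          / (Real.exp (σ * Srr) + ((N:ℝ) - 1) * Real.exp (σ * Sry))
          * (if j = 0 then Rv else Yv)
      = if j = 0
        then Real.exp (σ * Srr) / (Real.exp (σ * Srr) + ((N:ℝ) - 1) * Real.exp (σ * Sry)) * Rv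
        else Real.exp (σ * Sry) / (Real.exp (σ * Srr) + ((N:ℝ) - 1) * Real.exp (σ * Sry)) * Yv := by
    intro j
    rw [hT j]
    by_cases h : j = 0 <;> simp [h]
  rw [Finset.sum_congr rfl (fun j _ => hterm j), fin_sum_ite]
  field_simp

set_option maxHeartbeats 1000000 in
/-- Dot-product self-attention with fixed nonzero weight matrices is not globally
Lipschitz continuous on `ℝ^{N×d}` (w.r.t. the Frobenius norm) when `N ≥ 2` and
`W^Q (W^K)ᵀ ≠ 0`. -/
theorem attn_not_globally_lipschitz {N d D : ℕ} (hN : 2 ≤ N) (hD : 0 < D)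
    (Wq Wk Wv : Matrix (Fin d) (Fin D) ℝ)
    (hWq : Wq ≠ 0) (hWk : Wk ≠ 0) (hWv : Wv ≠ 0)
    (hQK : Wq * Wkᵀ ≠ 0) :
    ¬ ∃ C : ℝ, ∀ X Y : Matrix (Fin N) (Fin d) ℝ,
      frobNorm (attn Wq Wk Wv X - attn Wq Wk Wv Y) ≤ C * frobNorm (X - Y) := by
  rintro ⟨C, hC⟩
  haveI : NeZero N := ⟨by omega⟩
  have hexM : ∃ a b, (Wq * Wkᵀ) a b ≠ 0 := by
    by_contra h; push_neg at h; exact hQK (by ext a b; simpa using h a b)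
  obtain ⟨a, b, hM⟩ := hexM
  have hexV : ∃ p q, Wv p q ≠ 0 := by
    by_contra h; push_neg at h; exact hWv (by ext p q; simpa using h p q)
  obtain ⟨p, q, hV⟩ := hexV
  set σ : ℝ := 1 / Real.sqrt D with hσdef
  have hsqrt : (0:ℝ) < Real.sqrt D := Real.sqrt_pos.mpr (by exact_mod_cast hD)
  have hσ : 0 < σ := by rw [hσdef]; positivity
  set Mab : ℝ := ∑ k, Wq a k * Wk b k with hMabdef
  clear_value Mab
  have hMab : Mab ≠ 0 := by
    simpa [Matrix.mul_apply, Matrix.transpose_apply, hMabdef] using hM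
  set Maa : ℝ := ∑ k, Wq a k * Wk a k with hMaadef
  clear_value Maa
  set Map : ℝ := ∑ k, Wq a k * Wk p k with hMapdef
  clear_value Map
  set c1 : ℝ := -(Wv b q) / Wv p q with hc1def
  clear_value c1
  set c2 : ℝ := if Map = 0 then c1 else -Mab / Map with hc2def
  clear_value c2
  set c : ℝ := max c1 c2 + 1 with hcdef
  clear_value c
  have hcc1 : c1 < c := lt_of_le_of_lt (le_max_left c1 c2) (by rw [hcdef]; linarith)
  have hcc2 : c2 < c := lt_of_le_of_lt (le_max_right c1 c2) (by rw [hcdef]; linarith)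
  set ν : ℝ := Wv b q + c * Wv p q with hνdef
  clear_value ν
  have hν : ν ≠ 0 := by
    intro h
    have hc : c = c1 := by
      rw [hc1def]; field_simp
      rw [hνdef] at h; linarith
    exact absurd hc hcc1.ne'
  set τ : ℝ := Mab + c * Map with hτdef
  clear_value τ
  have hτ : τ ≠ 0 := by
    by_cases hm : Map = 0
    · rw [hτdef, hm]; simpa using hMab
    · intro h
      have hc : c = c2 := by
        rw [hc2def, if_neg hm]; field_simp
        rw [hτdef] at h; linarith
      exact absurd hc hcc2.ne'
  set W : ℝ := Wv a q with hWdef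
  clear_value W
  set η : ℝ := Real.exp (-(1/2)) - Real.exp (-1) with hηdef
  have hη : 0 < η := sub_pos.mpr (Real.exp_lt_exp.mpr (by norm_num))
  have hNR : (2:ℝ) ≤ (N:ℝ) := by exact_mod_cast hN
  set g : ℝ := (N:ℝ) - 1 with hgdef
  have hg1 : (1:ℝ) ≤ g := by rw [hgdef]; linarith
  have hg0 : (0:ℝ) ≤ g := by linarith
  set Ep : ℝ := Real.exp (1/2) with hEpdef
  have hEp : 0 < Ep := Real.exp_pos _
  set K : ℝ := (N:ℝ)^2 * Ep * |C| + (N:ℝ) * Ep * |W| with hKdef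
  clear_value K
  have hK : 0 ≤ K := by
    rw [hKdef]; positivity
  have hνa : 0 < |ν| := abs_pos.mpr hν
  have hτa : 0 < |τ| := abs_pos.mpr hτ
  set P : ℝ := g * |ν| * η * σ * |τ| with hPdef
  clear_value P
  have hgpos : (0:ℝ) < g := lt_of_lt_of_le one_pos hg1
  have hP : 0 < P := by
    rw [hPdef]
    exact mul_pos (mul_pos (mul_pos (mul_pos hgpos hνa) hη) hσ) hτa
  set U : ℝ := 1 + 2 * |Maa| / (σ * τ^2) + (K + 1) / P with hUdef
  clear_value U
  have hτsq : 0 < σ * τ^2 := by positivity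
  have hU1 : (1:ℝ) ≤ U := by
    rw [hUdef]
    have h1 : 0 ≤ 2 * |Maa| / (σ * τ^2) := by positivity
    have h2 : 0 ≤ (K + 1) / P := by positivity
    linarith
  have hUpos : (0:ℝ) < U := lt_of_lt_of_le one_pos hU1
  have hUa : 2 * |Maa| / (σ * τ^2) ≤ U := by
    rw [hUdef]
    have h2 : 0 ≤ (K + 1) / P := by positivity
    linarith
  have hUb : (K + 1) / P ≤ U := by
    rw [hUdef]
    have h1 : 0 ≤ 2 * |Maa| / (σ * τ^2) := by positivity
    linarith
  set δ : ℝ := -(1 / (σ * U * τ)) with hδdef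
  clear_value δ
  have hδστ : σ * (δ * U * τ) = -1 := by
    rw [hδdef]; field_simp
  have hδabs : |δ| = 1 / (σ * U * |τ|) := by
    rw [hδdef, abs_neg, abs_div, abs_one, abs_mul, abs_mul,
      abs_of_pos hσ, abs_of_pos hUpos]
  have hδpos : 0 < |δ| := by rw [hδabs]; positivity
  -- the two matrices
  set r : Fin d → ℝ := fun i => if i = a then δ else 0 with hrdef
  set y : Fin d → ℝ := fun i => U * ((if i = b then 1 else 0) + c * (if i = p then 1 else 0)) with hydef
  set z : Fin d → ℝ := fun _ => (0:ℝ) with hzdef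
  have hrsum : ∀ f : Fin d → ℝ, ∑ i, r i * f i = δ * f a := by
    intro f; simp [hrdef, ite_mul]
  have hysum : ∀ f : Fin d → ℝ, ∑ i, y i * f i = U * (f b + c * f p) := by
    intro f
    have h1 : ∀ i, y i * f i
        = U * ((if i = b then f i else 0) + c * (if i = p then f i else 0)) := by
      intro i; by_cases h1 : i = b <;> by_cases h2 : i = p <;> simp [hydef, h1, h2] <;> split_ifs <;> ring
    simp_rw [h1]
    rw [← Finset.mul_sum]
    congr 1
    rw [Finset.sum_add_distrib, ← Finset.mul_sum]
    simp [Finset.sum_ite_eq']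
  have hzsum : ∀ f : Fin d → ℝ, ∑ i, z i * f i = 0 := by intro f; simp [hzdef]
  set X1 : Matrix (Fin N) (Fin d) ℝ := Matrix.of fun j i => if j = (0:Fin N) then z i else y i with hX1
  set X2 : Matrix (Fin N) (Fin d) ℝ := Matrix.of fun j i => if j = (0:Fin N) then r i else y i with hX2
  set Yv : ℝ := U * ν with hYvdef
  clear_value Yv
  have hYveq : U * (Wv b q + c * Wv p q) = Yv := by rw [hYvdef, hνdef]
  have hA1 : attn Wq Wk Wv X1 0 q = g * Yv / (1 + g) := by
    rw [hX1, attn_row_zero hN]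
    simp only [hzsum, hysum, zero_mul, Finset.sum_const_zero, mul_zero, Real.exp_zero, one_mul, mul_one]
    rw [hYveq, hgdef]
    ring_nf
  set ε : ℝ := σ * (δ^2 * Maa) with hεdef
  clear_value ε
  have hSrr2 : ∑ k, (∑ i, r i * Wq i k) * (∑ i, r i * Wk i k) = δ^2 * Maa := by
    simp_rw [hrsum]
    rw [hMaadef, Finset.mul_sum]
    apply Finset.sum_congr rfl; intro k _; ring
  have hSry2 : ∑ k, (∑ i, r i * Wq i k) * (∑ i, y i * Wk i k) = δ * U * τ := by
    simp_rw [hrsum, hysum]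
    have h1 : ∀ k : Fin D, δ * Wq a k * (U * (Wk b k + c * Wk p k))
        = δ * U * (Wq a k * Wk b k) + δ * U * c * (Wq a k * Wk p k) := by
      intro k; ring
    rw [Finset.sum_congr rfl (fun k _ => h1 k), Finset.sum_add_distrib,
      ← Finset.mul_sum, ← Finset.mul_sum, ← hMabdef, ← hMapdef, hτdef]
    ring
  have hA2 : attn Wq Wk Wv X2 0 q
      = (Real.exp ε * (δ * W) + g * Real.exp (-1) * Yv) / (Real.exp ε + g * Real.exp (-1)) := by
    rw [hX2, attn_row_zero hN, hSrr2, hSry2]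
    rw [show (1 / Real.sqrt D) * (δ * U * τ) = (-1:ℝ) from hδστ]
    rw [hrsum (fun i => Wv i q), hysum (fun i => Wv i q)]
    rw [hYveq, ← hWdef, ← hεdef, ← hgdef]
  -- Frobenius norm of the difference of inputs
  have hent : ∀ (j : Fin N) i, (X2 - X1) j i
      = if j = (0:Fin N) then (if i = a then δ else 0) else 0 := by
    intro j i
    by_cases h : j = 0 <;> simp [hX1, hX2, h, hrdef, hzdef]
  have hrow : ∀ j : Fin N, (∑ i, ((X2 - X1) j i)^2) = if j = (0:Fin N) then δ^2 else 0 := by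
    intro j
    by_cases h : j = 0
    · simp [hent, h, apply_ite (· ^ (2:ℕ)), Finset.sum_ite_eq']
    · simp [hent, h]
  have hfrob : frobNorm (X2 - X1) = |δ| := by
    rw [frobNorm]
    rw [Finset.sum_congr rfl (fun j _ => hrow j), fin_sum_ite]
    rw [mul_zero, add_zero, Real.sqrt_sq_eq_abs]
  have hΔle : |attn Wq Wk Wv X2 0 q - attn Wq Wk Wv X1 0 q| ≤ C * |δ| := by
    have h1 := abs_entry_le_frobNorm (attn Wq Wk Wv X2 - attn Wq Wk Wv X1) 0 q
    rw [Matrix.sub_apply] at h1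
    have h2 := hC X2 X1
    rw [hfrob] at h2
    exact le_trans h1 h2
  -- scalar endgame
  set E : ℝ := Real.exp ε with hEdef
  clear_value E
  set F : ℝ := Real.exp (-1) with hFdef
  clear_value F
  have hEpos : 0 < E := by rw [hEdef]; exact Real.exp_pos _
  have hFpos : 0 < F := by rw [hFdef]; exact Real.exp_pos _
  -- bound on ε
  have hsq1 : σ^2 * δ^2 * U^2 * τ^2 = 1 := by
    calc σ^2 * δ^2 * U^2 * τ^2 = (σ * (δ * U * τ))^2 := by ring
      _ = (-1:ℝ)^2 := by rw [hδστ]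
      _ = 1 := by norm_num
  have hεabs : |ε| * (σ * U^2 * τ^2) = |Maa| := by
    rw [hεdef, abs_mul, abs_mul, abs_of_pos hσ, abs_of_nonneg (sq_nonneg δ)]
    linear_combination |Maa| * hsq1
  have h2M : 2 * |Maa| ≤ σ * U^2 * τ^2 := by
    have h1 : 2 * |Maa| ≤ U * (σ * τ^2) := (div_le_iff₀ hτsq).mp hUa
    have h2 : U * (σ * τ^2) ≤ U * (σ * τ^2) * U :=
      le_mul_of_one_le_right (by positivity) hU1
    have h3 : σ * U^2 * τ^2 = U * (σ * τ^2) * U := by ring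
    linarith
  have hε2 : |ε| ≤ 1/2 := by
    have hS : 0 < σ * U^2 * τ^2 := by positivity
    by_contra hcon
    push_neg at hcon
    have h3 : (1/2) * (σ * U^2 * τ^2) < |ε| * (σ * U^2 * τ^2) :=
      mul_lt_mul_of_pos_right hcon hS
    linarith
  have hεle := abs_le.mp hε2
  have hEub : E ≤ Ep := by
    rw [hEdef, hEpdef]; exact Real.exp_le_exp.mpr hεle.2
  have hElb : Real.exp (-(1/2)) ≤ E := by
    rw [hEdef]; exact Real.exp_le_exp.mpr hεle.1
  have hEF : η ≤ E - F := by
    rw [hηdef, hFdef]; linarith [hElb]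
  have hFEp : F ≤ Ep := by
    rw [hFdef, hEpdef]; exact Real.exp_le_exp.mpr (by norm_num)
  have hDnpos : 0 < E + g * F := by positivity
  have hdenpos : 0 < (1 + g) * (E + g * F) := by positivity
  have hDnle : E + g * F ≤ (N:ℝ) * Ep := by
    have : g * F ≤ g * Ep := mul_le_mul_of_nonneg_left hFEp hg0
    have hNg : (N:ℝ) = 1 + g := by rw [hgdef]; ring
    rw [hNg]; linarith
  have hΔeq : attn Wq Wk Wv X2 0 q - attn Wq Wk Wv X1 0 q
      = ((1 + g) * E * (δ * W) + g * Yv * (F - E)) / ((1 + g) * (E + g * F)) := by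
    rw [hA1, hA2]
    have h1g : (1:ℝ) + g ≠ 0 := by linarith
    field_simp [hDnpos.ne', h1g]
    ring
  have e1 : |g * Yv * (F - E)| = g * (U * |ν|) * (E - F) := by
    rw [abs_mul, abs_mul, abs_of_nonneg hg0, abs_of_nonpos (by linarith : F - E ≤ 0),
      hYvdef, abs_mul, abs_of_pos hUpos]
    ring
  have e2 : |(1 + g) * E * (δ * W)| = (1 + g) * E * (|δ| * |W|) := by
    rw [abs_mul, abs_mul, abs_mul, abs_of_pos (by linarith : (0:ℝ) < 1 + g), abs_of_pos hEpos]
  have habs2 : g * (U * |ν|) * (E - F) - (1 + g) * E * (|δ| * |W|)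
      ≤ |(1 + g) * E * (δ * W) + g * Yv * (F - E)| := by
    have key : ∀ x y : ℝ, |y| - |x| ≤ |x + y| := by
      intro x y
      have h := abs_add_le (x + y) (-x)
      rw [abs_neg] at h
      have h2 : x + y + -x = y := by ring
      rw [h2] at h
      linarith
    have t := key ((1 + g) * E * (δ * W)) (g * Yv * (F - E))
    rw [e1, e2] at t
    exact t
  have hnum_le : |(1 + g) * E * (δ * W) + g * Yv * (F - E)| ≤ C * |δ| * ((1 + g) * (E + g * F)) := by
    rw [hΔeq] at hΔle
    rw [abs_div, abs_of_pos hdenpos] at hΔle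
    exact (div_le_iff₀ hdenpos).mp hΔle
  -- combine
  have hchain : g * (U * |ν|) * η ≤ |δ| * K := by
    have s1 : g * (U * |ν|) * η ≤ g * (U * |ν|) * (E - F) := by
      apply mul_le_mul_of_nonneg_left hEF
      positivity
    have s2 : g * (U * |ν|) * (E - F) ≤ C * |δ| * ((1 + g) * (E + g * F)) + (1 + g) * E * (|δ| * |W|) := by
      linarith [habs2, hnum_le]
    have s3 : C * |δ| * ((1 + g) * (E + g * F)) ≤ |C| * |δ| * ((1 + g) * ((N:ℝ) * Ep)) := by
      have hf2 : (1 + g) * (E + g * F) ≤ (1 + g) * ((N:ℝ) * Ep) :=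
        mul_le_mul_of_nonneg_left hDnle (by linarith)
      have t1 : C * |δ| * ((1 + g) * (E + g * F)) ≤ |C| * |δ| * ((1 + g) * (E + g * F)) :=
        mul_le_mul_of_nonneg_right
          (mul_le_mul_of_nonneg_right (le_abs_self C) hδpos.le) hdenpos.le
      have t2 : |C| * |δ| * ((1 + g) * (E + g * F)) ≤ |C| * |δ| * ((1 + g) * ((N:ℝ) * Ep)) :=
        mul_le_mul_of_nonneg_left hf2 (by positivity)
      linarith
    have s4 : (1 + g) * E * (|δ| * |W|) ≤ (1 + g) * Ep * (|δ| * |W|) :=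
      mul_le_mul_of_nonneg_right
        (mul_le_mul_of_nonneg_left hEub (by linarith)) (by positivity)
    have hNg : (1 + g) = (N:ℝ) := by rw [hgdef]; ring
    have : |C| * |δ| * ((1 + g) * ((N:ℝ) * Ep)) + (1 + g) * Ep * (|δ| * |W|) = |δ| * K := by
      rw [hNg, hKdef]; ring
    linarith
  have hfin : P * U^2 ≤ K := by
    have h1 : g * U * |ν| * η * (σ * U * |τ|) ≤ K := by
      have hq1 : |δ| * (σ * U * |τ|) = 1 := by
        rw [hδabs]; field_simp
      calc g * U * |ν| * η * (σ * U * |τ|)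
          ≤ (|δ| * K) * (σ * U * |τ|) := by
            apply mul_le_mul_of_nonneg_right _ (by positivity)
            linarith [hchain]
        _ = K * (|δ| * (σ * U * |τ|)) := by ring
        _ = K := by rw [hq1]; ring
    have h2 : P * U^2 = g * U * |ν| * η * (σ * U * |τ|) := by rw [hPdef]; ring
    linarith [h1, h2.le, h2.ge]
  have hKP : K + 1 ≤ P * U := by
    have := (div_le_iff₀ hP).mp hUb
    linarith
  have h5 : P * U ≤ P * U * U := le_mul_of_one_le_right (by positivity) hU1
  have h6 : P * U^2 = P * U * U := by ring
  linarith
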